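/- Let Ω be a countably infinite set. The unique maximal subsemigroup of V ∩ S_{2,5} containing S_{1,2,3,4,5} is S_{1,2,4,5}; that is, a subsemigroup M of Ω^Ω with S_{1,2,3,4,5} ⊆ M ⊊ V ∩ S_{2,5} is maximal in V ∩ S_{2,5} (no subsemigroup T satisfies M ⊊ T ⊊ V ∩ S_{2,5}) if and only if M = S_{1,2,4,5}. -/

import Mathlib

/-!
Setting: `Ω` is a countably infinite set, `Function.End Ω = Ω → Ω` is the full
transformation semigroup (a subset is closed under composition in one order iff
it is closed in the other, so the lattice of subsemigroups is unaffected by the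
left-to-right convention of the paper).
-/

open Cardinal

/-- A transversal of `f`: a set on which `f` is injective and whose image is all of `Ωf`. -/
def IsTransversal {Ω : Type*} (f : Ω → Ω) (T : Set Ω) : Prop :=
  Set.InjOn f T ∧ f '' T = Set.range f

/-- The defect `d(f) = |Ω \ Ωf|`. -/
noncomputable def defect {Ω : Type*} (f : Ω → Ω) : Cardinal :=
  #((Set.range f)ᶜ : Set Ω)

/-- The collapse `c(f) = |Ω \ Σ|` for a transversal `Σ` of `f` (the value is
independent of the choice of transversal, so the infimum is the common value). -/
noncomputable def collapse {Ω : Type*} (f : Ω → Ω) : Cardinal :=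
  ⨅ T : {T : Set Ω // IsTransversal f T}, #(T.1ᶜ : Set Ω)

/-- The infinite contraction index `k(f) = |{α : αf⁻¹ infinite}|`. -/
noncomputable def contract {Ω : Type*} (f : Ω → Ω) : Cardinal :=
  #({α : Ω | (f ⁻¹' {α}).Infinite} : Set Ω)

def S1 {Ω : Type*} : Set (Function.End Ω) := {f | collapse f = 0 ∨ 0 < defect f}
def S2 {Ω : Type*} : Set (Function.End Ω) := {f | 0 < collapse f ∨ defect f = 0}
def S3 {Ω : Type*} : Set (Function.End Ω) := {f | collapse f < ℵ₀ ∨ ℵ₀ ≤ defect f}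
def S4 {Ω : Type*} : Set (Function.End Ω) := {f | ℵ₀ ≤ collapse f ∨ defect f < ℵ₀}
def S5 {Ω : Type*} : Set (Function.End Ω) := {f | contract f < ℵ₀}

/-- `Sym(Ω)`, the bijections of `Ω`. -/
def SymOmega {Ω : Type*} : Set (Function.End Ω) := {f | Function.Bijective f}

/-- `U = {f : d(f) = ∞ or 0 < c(f) < ∞} ∪ Sym(Ω)`. -/
def SetU {Ω : Type*} : Set (Function.End Ω) :=
  {f | ℵ₀ ≤ defect f ∨ (0 < collapse f ∧ collapse f < ℵ₀)} ∪ SymOmega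

/-- `V = {f : c(f) = ∞ or 0 < d(f) < ∞} ∪ Sym(Ω)`. -/
def SetV {Ω : Type*} : Set (Function.End Ω) :=
  {f | ℵ₀ ≤ collapse f ∨ (0 < defect f ∧ defect f < ℵ₀)} ∪ SymOmega

/-- `S_{1,2,3,4,5}`. -/
def S12345 {Ω : Type*} : Set (Function.End Ω) := S1 ∩ S2 ∩ S3 ∩ S4 ∩ S5

/-- The family `S_1, …, S_5` indexed by `Fin 5`. -/
def SS {Ω : Type*} : Fin 5 → Set (Function.End Ω) := ![S1, S2, S3, S4, S5]
section Aux

open Cardinal Set Function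

variable {Ω : Type*}

open Classical in
noncomputable def psec (g : Ω → Ω) (α : Ω) : Ω :=
  if h : ∃ x, g x = α then h.choose else α

lemma psec_spec {g : Ω → Ω} {α : Ω} (h : α ∈ Set.range g) : g (psec g α) = α := by
  obtain ⟨x, hx⟩ := h
  rw [psec, dif_pos ⟨x, hx⟩]
  exact Classical.choose_spec (⟨x, hx⟩ : ∃ x, g x = α)

/-- Extend a partial transversal to a transversal. -/
lemma exists_transversal_superset (g : Ω → Ω) {T : Set Ω} (hT : Set.InjOn g T) :
    ∃ T' : Set Ω, T ⊆ T' ∧ IsTransversal g T' := by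
  classical
  refine ⟨T ∪ psec g '' (Set.range g \ g '' T), Set.subset_union_left, ?_, ?_⟩
  · rintro a (ha | ⟨α, ⟨hα, hαT⟩, rfl⟩) b (hb | ⟨β, ⟨hβ, hβT⟩, rfl⟩) hab
    · exact hT ha hb hab
    · rw [psec_spec hβ] at hab; exact absurd ⟨a, ha, hab⟩ hβT
    · rw [psec_spec hα] at hab; exact absurd ⟨b, hb, hab.symm⟩ hαT
    · rw [psec_spec hα, psec_spec hβ] at hab; rw [hab]
  · apply Set.Subset.antisymm (Set.image_subset_range _ _)
    rintro α hα
    by_cases h : α ∈ g '' T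
    · obtain ⟨x, hx, rfl⟩ := h
      exact ⟨x, Set.mem_union_left _ hx, rfl⟩
    · exact ⟨psec g α, Set.mem_union_right _ ⟨α, ⟨hα, h⟩, rfl⟩, psec_spec hα⟩

lemma exists_transversal (g : Ω → Ω) : ∃ T : Set Ω, IsTransversal g T := by
  obtain ⟨T', _, h⟩ := exists_transversal_superset g (Set.injOn_empty g)
  exact ⟨T', h⟩

instance nonempty_transversal (g : Ω → Ω) : Nonempty {T : Set Ω // IsTransversal g T} :=
  let ⟨T, hT⟩ := exists_transversal g; ⟨⟨T, hT⟩⟩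

lemma collapse_le {g : Ω → Ω} {T : Set Ω} (hT : IsTransversal g T) :
    collapse g ≤ #(Tᶜ : Set Ω) :=
  ciInf_le (OrderBot.bddBelow _) (⟨T, hT⟩ : {T : Set Ω // IsTransversal g T})

lemma le_collapse {g : Ω → Ω} {a : Cardinal}
    (h : ∀ T : Set Ω, IsTransversal g T → a ≤ #(Tᶜ : Set Ω)) : a ≤ collapse g :=
  le_ciInf fun T => h T.1 T.2

lemma collapse_eq_zero_of_injective {g : Ω → Ω} (hg : Function.Injective g) :
    collapse g = 0 := by
  have h : IsTransversal g Set.univ := ⟨hg.injOn, Set.image_univ⟩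
  have := collapse_le h
  simpa using this

lemma injective_of_collapse_eq_zero {g : Ω → Ω} (hg : collapse g = 0) :
    Function.Injective g := by
  by_contra h
  rw [Function.not_injective_iff] at h
  obtain ⟨a, b, hab, hne⟩ := h
  have : (1 : Cardinal) ≤ collapse g := by
    refine le_collapse fun T hT => ?_
    have hne' : (Tᶜ : Set Ω).Nonempty := by
      by_contra hcon
      rw [Set.not_nonempty_iff_eq_empty, ← Set.compl_univ, compl_inj_iff] at hcon
      exact hne (hT.1 (hcon ▸ Set.mem_univ a) (hcon ▸ Set.mem_univ b) hab)
    rwa [Cardinal.one_le_iff_ne_zero, Cardinal.mk_ne_zero_iff, Set.nonempty_coe_sort]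
  rw [hg] at this
  exact absurd this (by norm_num)

lemma collapse_eq_zero_iff {g : Ω → Ω} : collapse g = 0 ↔ Function.Injective g :=
  ⟨injective_of_collapse_eq_zero, collapse_eq_zero_of_injective⟩

lemma defect_eq_zero_iff {f : Ω → Ω} : defect f = 0 ↔ Function.Surjective f := by
  rw [defect, Cardinal.mk_eq_zero_iff, Set.isEmpty_coe_sort, ← Set.compl_univ, compl_inj_iff,
    Set.range_eq_univ]

end Aux
section Aux2

open Cardinal Set Function

variable {Ω : Type*}

lemma defect_comp_le (f g : Ω → Ω) : defect (f ∘ g) ≤ defect f + defect g := by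
  have hsub : (Set.range (f ∘ g))ᶜ ⊆ (Set.range f)ᶜ ∪ f '' (Set.range g)ᶜ := by
    intro α hα
    by_cases h : α ∈ Set.range f
    · obtain ⟨x, rfl⟩ := h
      refine Or.inr ⟨x, fun hx => ?_, rfl⟩
      obtain ⟨y, rfl⟩ := hx
      exact hα ⟨y, rfl⟩
    · exact Or.inl h
  calc defect (f ∘ g) ≤ #((Set.range f)ᶜ ∪ f '' (Set.range g)ᶜ : Set Ω) :=
        Cardinal.mk_le_mk_of_subset hsub
    _ ≤ #((Set.range f)ᶜ : Set Ω) + #(f '' (Set.range g)ᶜ : Set Ω) := Cardinal.mk_union_le _ _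
    _ ≤ defect f + defect g := by
        exact add_le_add le_rfl (Cardinal.mk_image_le)

lemma injOn_of_comp {f g : Ω → Ω} {T : Set Ω} (h : Set.InjOn (f ∘ g) T) : Set.InjOn g T :=
  fun x hx y hy hxy => h hx hy (by simp [Function.comp, hxy])

lemma collapse_le_collapse_comp (f g : Ω → Ω) : collapse g ≤ collapse (f ∘ g) := by
  refine le_collapse fun T hT => ?_
  obtain ⟨T', hTT', hT'⟩ := exists_transversal_superset g (injOn_of_comp hT.1)
  exact (collapse_le hT').trans (Cardinal.mk_le_mk_of_subset (Set.compl_subset_compl.2 hTT'))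

lemma aleph0_le_collapse_comp {f g : Ω → Ω} (hf : ℵ₀ ≤ collapse f) (hg : defect g < ℵ₀) :
    ℵ₀ ≤ collapse (f ∘ g) := by
  refine le_collapse fun T hT => ?_
  by_contra hcon
  push_neg at hcon
  have hinj : Set.InjOn f (g '' T) := by
    rintro - ⟨x, hx, rfl⟩ - ⟨y, hy, rfl⟩ hxy
    rw [hT.1 hx hy hxy]
  obtain ⟨Sg, hsub, hSg⟩ := exists_transversal_superset f hinj
  have h1 : (Sg : Set Ω)ᶜ ⊆ (Set.range g)ᶜ ∪ g '' Tᶜ := by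
    intro α hα
    have hα' : α ∉ g '' T := fun h => hα (hsub h)
    by_cases h : α ∈ Set.range g
    · obtain ⟨x, rfl⟩ := h
      exact Or.inr ⟨x, fun hx => hα' ⟨x, hx, rfl⟩, rfl⟩
    · exact Or.inl h
  have h2 : #((Sg : Set Ω)ᶜ : Set Ω) < ℵ₀ := by
    calc #((Sg : Set Ω)ᶜ : Set Ω) ≤ #(((Set.range g)ᶜ ∪ g '' Tᶜ : Set Ω)) :=
          Cardinal.mk_le_mk_of_subset h1
      _ ≤ defect g + #(g '' Tᶜ : Set Ω) := Cardinal.mk_union_le _ _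
      _ ≤ defect g + #(Tᶜ : Set Ω) := add_le_add le_rfl Cardinal.mk_image_le
      _ < ℵ₀ := Cardinal.add_lt_aleph0 hg hcon
  exact absurd (hf.trans (collapse_le hSg)) (not_le.2 h2)

lemma contract_comp_lt {f g : Ω → Ω} (hf : contract f < ℵ₀) (hg : contract g < ℵ₀) :
    contract (f ∘ g) < ℵ₀ := by
  have hsub : {α : Ω | ((f ∘ g) ⁻¹' {α}).Infinite} ⊆
      {α : Ω | (f ⁻¹' {α}).Infinite} ∪ f '' {y : Ω | (g ⁻¹' {y}).Infinite} := by
    intro α hα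
    by_cases h : (f ⁻¹' {α}).Finite
    · have hU : (f ∘ g) ⁻¹' {α} = ⋃ y ∈ f ⁻¹' {α}, g ⁻¹' {y} := by
        ext x; simp [Function.comp]
      have hex : ∃ y ∈ f ⁻¹' {α}, (g ⁻¹' {y}).Infinite := by
        by_contra hcon
        push_neg at hcon
        have hcon : ∀ y ∈ f ⁻¹' {α}, (g ⁻¹' {y}).Finite := hcon
        exact hα (hU ▸ h.biUnion hcon)
      obtain ⟨y, hy, hyi⟩ := hex
      exact Or.inr ⟨y, hyi, hy⟩
    · exact Or.inl h
  calc contract (f ∘ g) ≤ #({α : Ω | (f ⁻¹' {α}).Infinite} ∪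
        f '' {y : Ω | (g ⁻¹' {y}).Infinite} : Set Ω) := Cardinal.mk_le_mk_of_subset hsub
    _ ≤ contract f + #(f '' {y : Ω | (g ⁻¹' {y}).Infinite} : Set Ω) := Cardinal.mk_union_le _ _
    _ ≤ contract f + contract g := add_le_add le_rfl Cardinal.mk_image_le
    _ < ℵ₀ := Cardinal.add_lt_aleph0 hf hg

end Aux2
section Aux3

open Cardinal Set Function

variable {Ω : Type*}

lemma contract_eq_zero_of_injective {f : Ω → Ω} (hf : Function.Injective f) :
    contract f = 0 := by
  have h : {α : Ω | (f ⁻¹' {α}).Infinite} = ∅ := by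
    ext α
    simp only [Set.mem_setOf_eq, Set.mem_empty_iff_false, iff_false]
    intro h
    exact h (Set.Subsingleton.finite fun x hx y hy => hf (hx.trans hy.symm))
  rw [contract, h]
  exact Cardinal.mk_emptyCollection Ω

lemma isTransversal_range_surjInv {w : Ω → Ω} (hw : Function.Surjective w) :
    IsTransversal w (Set.range (Function.surjInv hw)) := by
  constructor
  · rintro a ⟨y, rfl⟩ b ⟨z, rfl⟩ hab
    rw [Function.surjInv_eq hw, Function.surjInv_eq hw] at hab
    rw [hab]
  · rw [← Set.range_comp]
    have h1 : w ∘ Function.surjInv hw = id := funext fun y => Function.surjInv_eq hw y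
    rw [h1, Set.range_id]
    exact (Set.range_eq_univ.2 hw).symm

lemma key_factor {w g : Ω → Ω} (hw : Function.Surjective w) (hcw : ℵ₀ ≤ collapse w)
    (hcg : ℵ₀ ≤ collapse g) (hkg : contract g < ℵ₀) :
    ∃ e : Ω → Ω, w ∘ e = g ∧ ℵ₀ ≤ defect e ∧ ℵ₀ ≤ collapse e ∧ contract e < ℵ₀ := by
  set s := Function.surjInv hw with hs
  have hsinj : Function.Injective s := Function.injective_surjInv hw
  refine ⟨s ∘ g, funext fun x => Function.surjInv_eq hw (g x), ?_, ?_, ?_⟩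
  · have h1 : Set.range (s ∘ g) ⊆ Set.range s := Set.range_comp_subset_range g s
    have h2 : (Set.range s)ᶜ ⊆ (Set.range (s ∘ g))ᶜ := Set.compl_subset_compl.2 h1
    calc ℵ₀ ≤ collapse w := hcw
      _ ≤ #((Set.range s)ᶜ : Set Ω) := collapse_le (isTransversal_range_surjInv hw)
      _ ≤ defect (s ∘ g) := Cardinal.mk_le_mk_of_subset h2
  · exact hcg.trans (collapse_le_collapse_comp s g)
  · have hsub : {α : Ω | ((s ∘ g) ⁻¹' {α}).Infinite} ⊆
        s '' {y : Ω | (g ⁻¹' {y}).Infinite} := by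
      intro α hα
      obtain ⟨x, hx⟩ := hα.nonempty
      have hx' : s (g x) = α := hx
      refine ⟨g x, ?_, hx'⟩
      have heq : (s ∘ g) ⁻¹' {α} = g ⁻¹' {g x} := by
        ext z
        simp only [Set.mem_preimage, Set.mem_singleton_iff, Function.comp_apply, ← hx']
        exact ⟨fun h => hsinj h, fun h => by rw [h]⟩
      have hα2 : ((s ∘ g) ⁻¹' {α}).Infinite := hα
      rw [heq] at hα2
      exact hα2
    calc contract (s ∘ g) ≤ #(s '' {y : Ω | (g ⁻¹' {y}).Infinite} : Set Ω) :=
          Cardinal.mk_le_mk_of_subset hsub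
      _ ≤ contract g := Cardinal.mk_image_le
      _ < ℵ₀ := hkg

lemma exists_W_elem (Ω : Type*) [Countable Ω] [Infinite Ω] :
    ∃ u : Ω → Ω, Function.Surjective u ∧ ℵ₀ ≤ collapse u ∧ contract u < ℵ₀ := by
  classical
  obtain ⟨e⟩ : Nonempty (Ω ≃ ℕ) := nonempty_equiv_of_countable
  set u : Ω → Ω := fun x => e.symm (e x / 2) with hu
  have huval : ∀ m : ℕ, u (e.symm m) = e.symm (m / 2) := fun m => by
    simp [hu]
  refine ⟨u, ?_, ?_, ?_⟩
  · intro y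
    refine ⟨e.symm (2 * e y), ?_⟩
    have h2 : 2 * e y / 2 = e y := by omega
    rw [huval, h2, Equiv.symm_apply_apply]
  · refine le_collapse fun T hT => ?_
    set F : ℕ → Ω := fun n => if e.symm (2 * n) ∈ T then e.symm (2 * n + 1) else e.symm (2 * n)
      with hF
    have hnotboth : ∀ n : ℕ, e.symm (2 * n) ∈ T → e.symm (2 * n + 1) ∈ T → False := by
      intro n h1 h2
      have heq : u (e.symm (2 * n)) = u (e.symm (2 * n + 1)) := by
        rw [huval, huval]
        congr 1
        omega
      have h3 : (2 * n : ℕ) = 2 * n + 1 := e.symm.injective (hT.1 h1 h2 heq)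
      omega
    have hFmem : ∀ n : ℕ, F n ∈ Tᶜ := by
      intro n
      rw [hF]
      by_cases h : e.symm (2 * n) ∈ T
      · simp only [if_pos h]
        exact fun hmem => hnotboth n h hmem
      · simp only [if_neg h]
        exact h
    have hFr : ∀ n : ℕ, F n = e.symm (2 * n) ∨ F n = e.symm (2 * n + 1) := by
      intro n
      rw [hF]
      by_cases h : e.symm (2 * n) ∈ T
      · simp [if_pos h]
      · simp [if_neg h]
    have hFinj : Function.Injective F := by
      intro n m hnm
      rcases hFr n with h1 | h1 <;> rcases hFr m with h2 | h2 <;>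
        rw [h1, h2] at hnm <;> have := e.symm.injective hnm <;> omega
    have hinf : (Tᶜ : Set Ω).Infinite :=
      Set.infinite_of_injective_forall_mem hFinj hFmem
    haveI := hinf.to_subtype
    exact Cardinal.aleph0_le_mk _
  · have h : {α : Ω | (u ⁻¹' {α}).Infinite} = ∅ := by
      ext α
      simp only [Set.mem_setOf_eq, Set.mem_empty_iff_false, iff_false]
      intro hα
      have hsub : u ⁻¹' {α} ⊆ {e.symm (2 * e α), e.symm (2 * e α + 1)} := by
        intro x hx
        have hx' : e.symm (e x / 2) = α := hx
        have : e x / 2 = e α := by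
          have := congrArg e hx'
          simpa using this
        have : e x = 2 * e α ∨ e x = 2 * e α + 1 := by omega
        rcases this with h | h <;> [left; right] <;>
          · have := congrArg e.symm h
            simpa using this
      exact hα (Set.Finite.subset (Set.toFinite _) hsub)
    rw [contract, h, Cardinal.mk_emptyCollection]
    exact Cardinal.aleph0_pos

end Aux3
section Main

open Cardinal Set Function

variable {Ω : Type*}

lemma S1_mul {f g : Function.End Ω} (hf : f ∈ S1) (hg : g ∈ S1) : f * g ∈ S1 := by
  show collapse (f * g) = 0 ∨ 0 < defect (f * g)
  rw [Function.End.mul_def]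
  by_cases hd : defect (f ∘ g) = 0
  · left
    have hsurj : Function.Surjective (f ∘ g) := defect_eq_zero_iff.1 hd
    have hfs : Function.Surjective f := hsurj.of_comp
    have hfc : collapse f = 0 := by
      rcases hf with h | h
      · exact h
      · rw [defect_eq_zero_iff.2 hfs] at h; exact absurd h (lt_irrefl 0)
    have hfi : Function.Injective f := injective_of_collapse_eq_zero hfc
    have hgs : Function.Surjective g := by
      intro y
      obtain ⟨x, hx⟩ := hsurj (f y)
      exact ⟨x, hfi hx⟩
    have hgc : collapse g = 0 := by
      rcases hg with h | h
      · exact h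
      · rw [defect_eq_zero_iff.2 hgs] at h; exact absurd h (lt_irrefl 0)
    exact collapse_eq_zero_of_injective
      (hfi.comp (injective_of_collapse_eq_zero hgc))
  · exact Or.inr (pos_iff_ne_zero.2 hd)

lemma S2_mul {f g : Function.End Ω} (hf : f ∈ S2) (hg : g ∈ S2) : f * g ∈ S2 := by
  show 0 < collapse (f * g) ∨ defect (f * g) = 0
  rw [Function.End.mul_def]
  by_cases hc : collapse (f ∘ g) = 0
  · right
    have hinj : Function.Injective (f ∘ g) := injective_of_collapse_eq_zero hc
    have hgi : Function.Injective g := hinj.of_comp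
    have hgd : defect g = 0 := by
      rcases hg with h | h
      · rw [collapse_eq_zero_of_injective hgi] at h; exact absurd h (lt_irrefl 0)
      · exact h
    have hgs : Function.Surjective g := defect_eq_zero_iff.1 hgd
    have hfi : Function.Injective f := by
      intro x y hxy
      obtain ⟨a, rfl⟩ := hgs x
      obtain ⟨b, rfl⟩ := hgs y
      rw [hinj hxy]
    have hfd : defect f = 0 := by
      rcases hf with h | h
      · rw [collapse_eq_zero_of_injective hfi] at h; exact absurd h (lt_irrefl 0)
      · exact h
    exact defect_eq_zero_iff.2 ((defect_eq_zero_iff.1 hfd).comp hgs)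
  · exact Or.inl (pos_iff_ne_zero.2 hc)

lemma S4_mul {f g : Function.End Ω} (hf : f ∈ S4) (hg : g ∈ S4) : f * g ∈ S4 := by
  show ℵ₀ ≤ collapse (f * g) ∨ defect (f * g) < ℵ₀
  rw [Function.End.mul_def]
  by_cases hc : ℵ₀ ≤ collapse (f ∘ g)
  · exact Or.inl hc
  · right
    rw [not_le] at hc
    have hcg : collapse g < ℵ₀ := (collapse_le_collapse_comp f g).trans_lt hc
    have hdg : defect g < ℵ₀ := by
      rcases hg with h | h
      · exact absurd (h.trans_lt hcg) (lt_irrefl _)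
      · exact h
    have hdf : defect f < ℵ₀ := by
      rcases hf with h | h
      · exact absurd (aleph0_le_collapse_comp h hdg) (not_le.2 hc)
      · exact h
    exact (defect_comp_le f g).trans_lt (Cardinal.add_lt_aleph0 hdf hdg)

lemma S5_mul {f g : Function.End Ω} (hf : f ∈ S5) (hg : g ∈ S5) : f * g ∈ S5 := by
  show contract (f * g) < ℵ₀
  rw [Function.End.mul_def]
  exact contract_comp_lt hf hg

lemma N_mul {f g : Function.End Ω} (hf : f ∈ (S1 ∩ S2 ∩ S4 ∩ S5 : Set (Function.End Ω)))
    (hg : g ∈ (S1 ∩ S2 ∩ S4 ∩ S5 : Set (Function.End Ω))) :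
    f * g ∈ (S1 ∩ S2 ∩ S4 ∩ S5 : Set (Function.End Ω)) :=
  ⟨⟨⟨S1_mul hf.1.1.1 hg.1.1.1, S2_mul hf.1.1.2 hg.1.1.2⟩, S4_mul hf.1.2 hg.1.2⟩,
    S5_mul hf.2 hg.2⟩

lemma N_subset_full : (S1 ∩ S2 ∩ S4 ∩ S5 : Set (Function.End Ω)) ⊆ SetV ∩ (S2 ∩ S5) := by
  rintro f ⟨⟨⟨hf1, hf2⟩, hf4⟩, hf5⟩
  refine ⟨?_, hf2, hf5⟩
  by_cases hc : ℵ₀ ≤ collapse f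
  · exact Set.mem_union_left _ (Or.inl hc)
  · rw [not_le] at hc
    have hd : defect f < ℵ₀ := by
      rcases hf4 with h | h
      · exact absurd h (not_le.2 hc)
      · exact h
    by_cases hd0 : defect f = 0
    · have hfs : Function.Surjective f := defect_eq_zero_iff.1 hd0
      have hfc : collapse f = 0 := by
        rcases hf1 with h | h
        · exact h
        · rw [hd0] at h; exact absurd h (lt_irrefl 0)
      exact Set.mem_union_right _ ⟨injective_of_collapse_eq_zero hfc, hfs⟩
    · exact Set.mem_union_left _ (Or.inr ⟨pos_iff_ne_zero.2 hd0, hd⟩)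

lemma not_S4_case {g : Function.End Ω} (hg : g ∈ SetV) (h : ¬(ℵ₀ ≤ collapse g ∨ defect g < ℵ₀)) :
    False := by
  push_neg at h
  obtain ⟨hc, hd⟩ := h
  rcases hg with (h1 | h1) | hbij
  · exact absurd h1 (not_le.2 hc)
  · exact absurd h1.2 (not_lt.2 hd)
  · rw [defect_eq_zero_iff.2 hbij.surjective] at hd
    exact Cardinal.aleph0_ne_zero (le_zero_iff.1 hd)

lemma not_S1_case {g : Function.End Ω} (hg : g ∈ SetV)
    (h : ¬(collapse g = 0 ∨ 0 < defect g)) :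
    Function.Surjective g ∧ ℵ₀ ≤ collapse g := by
  push_neg at h
  obtain ⟨hc, hd⟩ := h
  rw [le_zero_iff] at hd
  refine ⟨defect_eq_zero_iff.1 hd, ?_⟩
  rcases hg with (h1 | h1) | hbij
  · exact h1
  · rw [hd] at h1; exact absurd h1.1 (lt_irrefl 0)
  · exact absurd (collapse_eq_zero_of_injective hbij.injective) hc

lemma crux {g : Function.End Ω} (hg : g ∈ SetV ∩ (S2 ∩ S5)) (hgn : g ∉ S12345) :
    ℵ₀ ≤ collapse g ∧ contract g < ℵ₀ := by
  obtain ⟨hgV, hg2, hg5⟩ := hg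
  refine ⟨?_, hg5⟩
  by_cases h1 : g ∈ S1
  · by_cases h3 : g ∈ S3
    · by_cases h4 : g ∈ S4
      · exact absurd ⟨⟨⟨⟨h1, hg2⟩, h3⟩, h4⟩, hg5⟩ hgn
      · exact absurd (not_S4_case hgV h4) id
    · rcases not_or.1 h3 with ⟨hc, _⟩
      exact not_lt.1 hc
  · exact (not_S1_case hgV h1).2

lemma cruxN {g : Function.End Ω} (hg : g ∈ SetV ∩ (S2 ∩ S5))
    (hgn : g ∉ (S1 ∩ S2 ∩ S4 ∩ S5 : Set (Function.End Ω))) :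
    Function.Surjective g ∧ ℵ₀ ≤ collapse g := by
  obtain ⟨hgV, hg2, hg5⟩ := hg
  by_cases h1 : g ∈ S1
  · by_cases h4 : g ∈ S4
    · exact absurd ⟨⟨⟨h1, hg2⟩, h4⟩, hg5⟩ hgn
    · exact absurd (not_S4_case hgV h4) id
  · exact not_S1_case hgV h1

end Main
/-- The unique maximal subsemigroup of `V ∩ S_{2,5}` containing `S_{1,2,3,4,5}`
is `S_{1,2,4,5}`. -/
theorem stmt18 (Ω : Type) [Countable Ω] [Infinite Ω] (M : Set (Function.End Ω))
    (hM : ∀ a ∈ M, ∀ b ∈ M, a * b ∈ M)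
    (hsub : S12345 ⊆ M) (hlt : M ⊂ SetV ∩ (S2 ∩ S5)) :
    (¬ ∃ T : Set (Function.End Ω),
        (∀ a ∈ T, ∀ b ∈ T, a * b ∈ T) ∧ M ⊂ T ∧ T ⊂ SetV ∩ (S2 ∩ S5)) ↔
      M = S1 ∩ S2 ∩ S4 ∩ S5 := by
  classical
  obtain ⟨u, hus, huc, huk⟩ := exists_W_elem Ω
  have hufull : u ∈ SetV ∩ (S2 ∩ S5) :=
    ⟨Set.mem_union_left _ (Or.inl huc),
      Or.inl (Cardinal.aleph0_pos.trans_le huc), huk⟩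
  have huN : u ∉ (S1 ∩ S2 ∩ S4 ∩ S5 : Set (Function.End Ω)) := by
    rintro ⟨⟨⟨h1, _⟩, _⟩, _⟩
    rcases h1 with h1 | h1
    · rw [h1] at huc
      exact Cardinal.aleph0_ne_zero (le_zero_iff.1 huc)
    · rw [defect_eq_zero_iff.2 hus] at h1
      exact lt_irrefl 0 h1
  have hgen : ∀ P : Set (Function.End Ω), (∀ a ∈ P, ∀ b ∈ P, a * b ∈ P) → S12345 ⊆ P →
      ∀ m ∈ P, m ∈ SetV ∩ (S2 ∩ S5) → m ∉ (S1 ∩ S2 ∩ S4 ∩ S5 : Set (Function.End Ω)) →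
      SetV ∩ (S2 ∩ S5) ⊆ P := by
    intro P hP hPs m hmP hmfull hmN g hg
    by_cases hgS : g ∈ S12345
    · exact hPs hgS
    · obtain ⟨hcg, hkg⟩ := crux hg hgS
      obtain ⟨hms, hmc⟩ := cruxN hmfull hmN
      obtain ⟨e, hfe, hde, hce, hke⟩ := key_factor hms hmc hcg hkg
      let e' : Function.End Ω := e
      have heS : e' ∈ (S12345 : Set (Function.End Ω)) :=
        ⟨⟨⟨⟨Or.inr (Cardinal.aleph0_pos.trans_le hde),
            Or.inl (Cardinal.aleph0_pos.trans_le hce)⟩, Or.inr hde⟩, Or.inl hce⟩, hke⟩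
      have hme : m * e' = g := hfe
      rw [← hme]
      exact hP m hmP e' (hPs heS)
  constructor
  · intro hnoT
    by_contra hne
    have hMN : M ⊆ (S1 ∩ S2 ∩ S4 ∩ S5 : Set (Function.End Ω)) := by
      intro m hm
      by_contra hmN
      exact hlt.2 (hgen M hM hsub m hm (hlt.1 hm) hmN)
    refine hnoT ⟨S1 ∩ S2 ∩ S4 ∩ S5, fun a ha b hb => N_mul ha hb, ?_, ?_⟩
    · exact ⟨hMN, fun h => hne (Set.Subset.antisymm hMN h)⟩
    · exact ⟨N_subset_full, fun h => huN (h hufull)⟩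
  · rintro rfl ⟨T, hTmul, hMT, hTfull⟩
    obtain ⟨t, htT, htM⟩ := Set.exists_of_ssubset hMT
    exact hTfull.2 (hgen T hTmul (hsub.trans hMT.1) t htT (hTfull.1 htT) htM)
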